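/- For all integers n ≥ 1, 1 ≤ i ≤ n-1 and k ≥ 1: C(n-i,k)·C(i-1,k-1) - C(n-i-1,k)·C(i,k-1) = C(n-i-1,k-1)·C(i,k-1) - C(n-i,k)·C(i-1,k-2). -/
import Mathlib


/-- The binomial coefficient `C(a,b)` for integer arguments, with the convention that
`C(a,b) = 0` unless `0 ≤ b ≤ a`. -/
def Cb (a b : ℤ) : ℚ :=
  if 0 ≤ b ∧ b ≤ a then (a.toNat.choose b.toNat : ℚ) else 0

lemma Cb_natCast (m j : ℕ) : Cb m j = (m.choose j : ℚ) := by
  unfold Cb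
  split
  · simp
  · rename_i h
    have : m < j := by
      push_neg at h
      exact_mod_cast h (by positivity)
    rw [Nat.choose_eq_zero_of_lt this]
    simp

lemma Cb_neg (a b : ℤ) (hb : b < 0) : Cb a b = 0 := by
  unfold Cb
  rw [if_neg]
  rintro ⟨h, -⟩; omega

lemma Cb_pascal (a b : ℤ) (ha : 1 ≤ a) :
    Cb a b = Cb (a - 1) b + Cb (a - 1) (b - 1) := by
  obtain ⟨m, rfl⟩ : ∃ m : ℕ, a = (m : ℤ) + 1 := ⟨(a - 1).toNat, by omega⟩
  rcases lt_or_ge b 0 with hb | hb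
  · rw [Cb_neg _ _ hb, Cb_neg _ _ hb, Cb_neg _ _ (by omega)]; ring
  rcases eq_or_lt_of_le hb with hb0 | hb0
  · subst b
    have h1 : Cb ((m : ℤ) + 1) 0 = ((m + 1).choose 0 : ℚ) := by
      exact_mod_cast Cb_natCast (m + 1) 0
    have h2 : Cb (m : ℤ) 0 = (m.choose 0 : ℚ) := by exact_mod_cast Cb_natCast m 0
    rw [h1]
    rw [show (m : ℤ) + 1 - 1 = (m : ℤ) by ring, h2, Cb_neg _ _ (by norm_num)]
    simp
  · obtain ⟨j, rfl⟩ : ∃ j : ℕ, b = (j : ℤ) + 1 := ⟨(b - 1).toNat, by omega⟩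
    have h1 : Cb ((m : ℤ) + 1) ((j : ℤ) + 1) = ((m + 1).choose (j + 1) : ℚ) := by
      exact_mod_cast Cb_natCast (m + 1) (j + 1)
    have h2 : Cb (m : ℤ) ((j : ℤ) + 1) = (m.choose (j + 1) : ℚ) := by
      exact_mod_cast Cb_natCast m (j + 1)
    have h3 : Cb (m : ℤ) (j : ℤ) = (m.choose j : ℚ) := Cb_natCast m j
    rw [h1, show (m : ℤ) + 1 - 1 = (m : ℤ) by ring,
      show (j : ℤ) + 1 - 1 = (j : ℤ) by ring, h2, h3, Nat.choose_succ_succ]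
    push_cast
    ring

/-- For `n ≥ 1`, `1 ≤ i ≤ n-1` and `k ≥ 1`:
`C(n-i,k)C(i-1,k-1) - C(n-i-1,k)C(i,k-1) = C(n-i-1,k-1)C(i,k-1) - C(n-i,k)C(i-1,k-2)`. -/
theorem stmt16 (n i k : ℤ) (hn : 1 ≤ n) (hi1 : 1 ≤ i) (hi2 : i ≤ n - 1) (hk : 1 ≤ k) :
    Cb (n - i) k * Cb (i - 1) (k - 1) - Cb (n - i - 1) k * Cb i (k - 1)
      = Cb (n - i - 1) (k - 1) * Cb i (k - 1) - Cb (n - i) k * Cb (i - 1) (k - 2) := by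
  have h1 : Cb (n - i) k = Cb (n - i - 1) k + Cb (n - i - 1) (k - 1) :=
    Cb_pascal _ _ (by omega)
  have h2 : Cb i (k - 1) = Cb (i - 1) (k - 1) + Cb (i - 1) (k - 2) := by
    have := Cb_pascal i (k - 1) hi1
    rwa [show k - 1 - 1 = k - 2 by ring] at this
  rw [h1, h2]; ring
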